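/- arXiv:2203.10495 — 3 statements merged into one kernel-verified Lean document; each statement's English description precedes it below -/
import Mathlib

section
/- Let n ≥ 2 and let μ₁, …, μₙ be distinct nonzero real numbers. Define θ_k = ∏_{j ≠ k} μ_k/(μ_k - μ_j). Then ∑_{k=1}^n θ_k μ_k = ∑_{k=1}^n μ_k. -/
open Finset Polynomial

lemma basis_leadingCoeff {n : ℕ} (μ : Fin n → ℝ) (hinj : Function.Injective μ) (k : Fin n) :
    (Lagrange.basis Finset.univ μ k).leadingCoeff = Lagrange.nodalWeight Finset.univ μ k := by
  classical
  rw [Lagrange.basis, leadingCoeff_prod, Lagrange.nodalWeight]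
  refine Finset.prod_congr rfl fun j hj => ?_
  have hne : μ k ≠ μ j := fun h => (Finset.mem_erase.mp hj).1.symm (hinj h)
  rw [Lagrange.basisDivisor, leadingCoeff_mul, leadingCoeff_C,
    leadingCoeff_X_sub_C, mul_one]

theorem stmt_3 (n : ℕ) (hn : 2 ≤ n) (μ : Fin n → ℝ)
    (hμ0 : ∀ k, μ k ≠ 0) (hinj : Function.Injective μ) :
    ∑ k : Fin n, (∏ j ∈ Finset.univ.erase k, μ k / (μ k - μ j)) * μ k
      = ∑ k : Fin n, μ k := by
  classical
  have hinj' : Set.InjOn μ (Finset.univ : Finset (Fin n)) := fun a _ b _ h => hinj h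
  have hcard : (Finset.univ : Finset (Fin n)).card = n := by simp
  have hn0 : 0 < n := lt_of_lt_of_le (by norm_num) hn
  set P : Polynomial ℝ := Lagrange.nodal Finset.univ μ with hP
  have hdegP : P.degree = (n : ℕ) := by rw [hP, Lagrange.degree_nodal, hcard]
  have hdegX : ((X : ℝ[X]) ^ n).degree = (n : ℕ) := by simp
  set Q : Polynomial ℝ := X ^ n - P with hQdef
  have hdegQ : Q.degree < (n : ℕ) := by
    rw [hQdef]
    refine lt_of_lt_of_le (degree_sub_lt (by rw [hdegP, hdegX]) (pow_ne_zero _ X_ne_zero) ?_) hdegX.le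
    rw [(monic_X_pow n).leadingCoeff, (Lagrange.nodal_monic).leadingCoeff]
  have hQ : Q = Lagrange.interpolate Finset.univ μ (fun k => μ k ^ n) := by
    refine Lagrange.eq_interpolate_of_eval_eq _ hinj' (by rwa [hcard]) fun i _ => ?_
    simp [hQdef, hP, Lagrange.eval_nodal_at_node (Finset.mem_univ i)]
  -- coefficient n-1 of Q, computed two ways
  have hXc : ((X : ℝ[X]) ^ n).coeff (n - 1) = 0 := by
    rw [coeff_X_pow, if_neg (by omega)]
  have hPc : P.coeff (n - 1) = -∑ k : Fin n, μ k := by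
    have := prod_X_sub_C_coeff_card_pred (Finset.univ : Finset (Fin n)) μ (by rwa [hcard])
    rw [hP, Lagrange.nodal_eq]
    rwa [hcard] at this
  have h1 : Q.coeff (n - 1) = ∑ k : Fin n, μ k := by
    rw [hQdef, coeff_sub, hXc, hPc]; ring
  have h2 : Q.coeff (n - 1)
      = ∑ k : Fin n, μ k ^ n * Lagrange.nodalWeight Finset.univ μ k := by
    rw [hQ, Lagrange.interpolate_apply, finset_sum_coeff]
    refine Finset.sum_congr rfl fun k _ => ?_
    have hdb : (Lagrange.basis Finset.univ μ k).natDegree = n - 1 := by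
      rw [Lagrange.natDegree_basis hinj' (Finset.mem_univ k), hcard]
    rw [coeff_C_mul, ← hdb, ← leadingCoeff, basis_leadingCoeff μ hinj k]
  -- identify LHS with the weighted sum
  have h3 : ∀ k : Fin n,
      (∏ j ∈ Finset.univ.erase k, μ k / (μ k - μ j)) * μ k
        = μ k ^ n * Lagrange.nodalWeight Finset.univ μ k := by
    intro k
    have hce : (Finset.univ.erase k).card = n - 1 := by
      rw [Finset.card_erase_of_mem (Finset.mem_univ k), hcard]
    rw [Lagrange.nodalWeight]
    simp_rw [div_eq_mul_inv]
    rw [Finset.prod_mul_distrib, Finset.prod_const, hce]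
    have hp : μ k ^ (n - 1) * μ k = μ k ^ n := by
      rw [← pow_succ]; congr 1; omega
    rw [mul_comm _ (μ k), ← mul_assoc, mul_comm (μ k) _, hp]
  calc ∑ k : Fin n, (∏ j ∈ Finset.univ.erase k, μ k / (μ k - μ j)) * μ k
      = ∑ k : Fin n, μ k ^ n * Lagrange.nodalWeight Finset.univ μ k :=
        Finset.sum_congr rfl fun k _ => h3 k
    _ = Q.coeff (n - 1) := h2.symm
    _ = ∑ k : Fin n, μ k := h1
end

section
/- Let μ₁, μ₂ be distinct nonzero real numbers and m ≥ 2 an integer. If ∑_{j=0}^m μ₁^j μ₂^{m-j} = μ₁^m + μ₂^m, then m is odd and μ₂ = -μ₁. -/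
open Finset

theorem stmt_9 (μ₁ μ₂ : ℝ) (h₁ : μ₁ ≠ 0) (h₂ : μ₂ ≠ 0) (hne : μ₁ ≠ μ₂)
    (m : ℕ) (hm : 2 ≤ m)
    (h : ∑ j ∈ Finset.range (m + 1), μ₁ ^ j * μ₂ ^ (m - j) = μ₁ ^ m + μ₂ ^ m) :
    Odd m ∧ μ₂ = -μ₁ := by
  have hg := geom_sum₂_mul μ₁ μ₂ (m + 1)
  simp only [Nat.add_sub_cancel] at hg
  rw [h] at hg
  have key : μ₁ ^ (m - 1) = μ₂ ^ (m - 1) := by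
    have h3 : μ₂ ^ m * μ₁ = μ₁ ^ m * μ₂ := by linear_combination hg
    have hm1 : m - 1 + 1 = m := by omega
    have : (μ₁ ^ (m - 1) - μ₂ ^ (m - 1)) * (μ₁ * μ₂) = 0 := by
      have e1 : μ₁ ^ (m-1) * μ₁ = μ₁ ^ m := by rw [← pow_succ, hm1]
      have e2 : μ₂ ^ (m-1) * μ₂ = μ₂ ^ m := by rw [← pow_succ, hm1]
      linear_combination μ₂ * e1 - μ₁ * e2 - h3
    rcases mul_eq_zero.1 this with h4 | h4
    · linarith [sub_eq_zero.1 h4]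
    · exact absurd (mul_eq_zero.1 h4) (by simp [h₁, h₂])
  have hodd : Odd m := by
    by_contra hev
    rw [Nat.not_odd_iff_even] at hev
    have : Odd (m - 1) := Nat.Even.sub_odd (by omega) hev odd_one
    exact hne (this.strictMono_pow.injective key)
  refine ⟨hodd, ?_⟩
  have hev : Even (m - 1) := Nat.Odd.sub_odd hodd odd_one
  have habs : |μ₁| ^ (m - 1) = |μ₂| ^ (m - 1) := by
    rw [← abs_pow, ← abs_pow, key]
  have habs2 : |μ₁| = |μ₂| :=
    (pow_left_strictMonoOn₀ (by omega : m - 1 ≠ 0)).injOn (show |μ₁| ∈ {a : ℝ | 0 ≤ a} from abs_nonneg μ₁) (show |μ₂| ∈ {a : ℝ | 0 ≤ a} from abs_nonneg μ₂) habs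
  rcases abs_eq_abs.1 habs2 with h5 | h5
  · exact absurd h5 hne
  · linarith
end

section
/- Let n ≥ 2 and let μ₁, …, μₙ be distinct nonzero real numbers with θ_k = ∏_{j ≠ k} μ_k/(μ_k - μ_j). Then ∑_{k=1}^n θ_k μ_k² - ∑_{k=1}^n μ_k² = ∑_{1 ≤ i < j ≤ n} μ_i μ_j, i.e., the m = 2 case of the identity ∑_k θ_k μ_k^m = h_m(μ): h₂(μ₁,…,μₙ) = ∑_k μ_k² + ∑_{i<j} μ_i μ_j. -/
open Finset Polynomial

-- 2 * (sum over pairs i<j) = (sum)^2 - sum of squares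
lemma aux_offdiag {n : ℕ} (μ : Fin n → ℝ) :
    2 * (∑ i : Fin n, ∑ j ∈ Finset.Ioi i, μ i * μ j)
      = (∑ i, μ i) ^ 2 - ∑ i, μ i ^ 2 := by
  have h := Finset.sum_sum_Ioi_add_eq_sum_sum_off_diag (fun i j : Fin n => μ i * μ j)
  have hL : ∑ i : Fin n, ∑ j ∈ Finset.Ioi i, (μ j * μ i + μ i * μ j)
      = 2 * (∑ i : Fin n, ∑ j ∈ Finset.Ioi i, μ i * μ j) := by
    rw [Finset.mul_sum]
    refine Finset.sum_congr rfl fun i _ => ?_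
    rw [Finset.mul_sum]
    exact Finset.sum_congr rfl fun j _ => by ring
  have hR : ∑ i : Fin n, ∑ j ∈ ({i}ᶜ : Finset (Fin n)), μ j * μ i
      = (∑ i, μ i) ^ 2 - ∑ i, μ i ^ 2 := by
    have key : ∀ i : Fin n, ∑ j ∈ ({i}ᶜ : Finset (Fin n)), μ j * μ i
        = (∑ j, μ j) * μ i - μ i * μ i := by
      intro i
      have h2 := Finset.sum_compl_add_sum ({i} : Finset (Fin n)) (fun j => μ j * μ i)
      rw [Finset.sum_singleton] at h2
      have h3 : ∑ j : Fin n, μ j * μ i = (∑ j, μ j) * μ i := by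
        rw [Finset.sum_mul]
      linarith
    rw [Finset.sum_congr rfl fun i _ => key i, Finset.sum_sub_distrib, ← Finset.mul_sum]
    have hsq : ∑ i : Fin n, μ i * μ i = ∑ i : Fin n, μ i ^ 2 :=
      Finset.sum_congr rfl fun i _ => by ring
    rw [hsq]; ring
  rw [hL] at h
  exact h.trans (by convert hR)

-- 2 * (sum over 2-element subsets of products) = (sum)^2 - sum of squares
lemma aux_pow2 {n : ℕ} (μ : Fin n → ℝ) (s : Finset (Fin n)) :
    2 * (∑ t ∈ s.powersetCard 2, ∏ i ∈ t, μ i)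
      = (∑ i ∈ s, μ i) ^ 2 - ∑ i ∈ s, μ i ^ 2 := by
  induction s using Finset.induction_on with
  | empty =>
    rw [Finset.powersetCard_eq_empty.mpr (by simp)]
    simp
  | @insert a s ha ih =>
    have h2 : (2 : ℕ) = Nat.succ 1 := rfl
    rw [h2, Finset.powersetCard_succ_insert ha]
    have hdisj : Disjoint (Finset.powersetCard (Nat.succ 1) s)
        ((Finset.powersetCard 1 s).image (insert a)) := by
      rw [Finset.disjoint_left]
      intro t ht ht'
      have h1 : t ⊆ s := (Finset.mem_powersetCard.mp ht).1
      obtain ⟨u, hu, rfl⟩ := Finset.mem_image.mp ht'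
      exact ha (h1 (Finset.mem_insert_self a u))
    rw [Finset.sum_union hdisj]
    have hinj : ∀ u ∈ Finset.powersetCard 1 s, ∀ u' ∈ Finset.powersetCard 1 s,
        insert a u = insert a u' → u = u' := by
      intro u hu u' hu' h
      have hau : a ∉ u := fun hau => ha ((Finset.mem_powersetCard.mp hu).1 hau)
      have hau' : a ∉ u' := fun hau => ha ((Finset.mem_powersetCard.mp hu').1 hau)
      rw [← Finset.erase_insert hau, ← Finset.erase_insert hau', h]
    rw [Finset.sum_image hinj]
    have himg : ∑ u ∈ Finset.powersetCard 1 s, ∏ i ∈ insert a u, μ i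
        = μ a * ∑ i ∈ s, μ i := by
      rw [Finset.powersetCard_one, Finset.sum_map, Finset.mul_sum]
      refine Finset.sum_congr rfl fun i hi => ?_
      have hai : a ∉ ({i} : Finset (Fin n)) := by
        simp only [Finset.mem_singleton]
        rintro rfl; exact ha hi
      rw [Function.Embedding.coeFn_mk, Finset.prod_insert hai, Finset.prod_singleton]
    rw [himg, Finset.sum_insert ha, Finset.sum_insert ha]
    have := ih
    ring_nf
    ring_nf at this
    linarith

theorem stmt_16 (n : ℕ) (hn : 2 ≤ n) (μ : Fin n → ℝ)
    (hμ0 : ∀ k, μ k ≠ 0) (hinj : Function.Injective μ) :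
    ∑ k : Fin n, (∏ j ∈ Finset.univ.erase k, μ k / (μ k - μ j)) * μ k ^ 2
        - ∑ k : Fin n, μ k ^ 2
      = ∑ i : Fin n, ∑ j ∈ Finset.Ioi i, μ i * μ j := by
  classical
  set e : ℝ := ∑ i, μ i with he
  set q : ℝ := ∑ i, μ i ^ 2 with hq
  set P : ℝ := ∑ t ∈ (Finset.univ : Finset (Fin n)).powersetCard 2, ∏ i ∈ t, μ i with hP
  set W : ℝ[X] := ∏ j : Fin n, (X - C (μ j)) with hW
  have hcardu : #(Finset.univ : Finset (Fin n)) = n := by simp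
  have hWmonic : W.Monic := monic_prod_of_monic _ _ fun i _ => monic_X_sub_C _
  have hWdeg : W.natDegree = n := by
    rw [hW, natDegree_prod_of_monic _ _ fun i _ => monic_X_sub_C _]
    simp
  have hW_n : W.coeff n = 1 := by
    have := hWmonic.coeff_natDegree
    rwa [hWdeg] at this
  have hW_hi : ∀ m, n < m → W.coeff m = 0 := fun m hm =>
    coeff_eq_zero_of_natDegree_lt (hWdeg ▸ hm)
  have hW_n1 : W.coeff (n - 1) = -e := by
    have h := Polynomial.prod_X_sub_C_coeff_card_pred (Finset.univ : Finset (Fin n)) μ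
      (by rw [hcardu]; omega)
    rwa [hcardu] at h
  have hW_n2 : W.coeff (n - 2) = P := by
    have hrw : ∀ j : Fin n, (X - C (μ j)) = X + C (-μ j) := by
      intro j; rw [map_neg, sub_eq_add_neg]
    have h := Finset.prod_X_add_C_coeff (Finset.univ : Finset (Fin n)) (fun j => -μ j)
      (k := n - 2) (by rw [hcardu]; omega)
    rw [hW, Finset.prod_congr rfl fun j _ => hrw j]
    rw [h, hcardu, show n - (n - 2) = 2 from by omega, hP]
    refine Finset.sum_congr rfl fun t ht => ?_
    have hcard : #t = 2 := (Finset.mem_powersetCard.mp ht).2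
    rw [show (∏ i ∈ t, -μ i) = ∏ i ∈ t, (-1 : ℝ) * μ i from by simp,
      Finset.prod_mul_distrib, Finset.prod_const, hcard]
    ring
  set f : ℝ[X] := X ^ (n + 1) - (X + C e) * W with hf
  have hcoeff_mul : ∀ m : ℕ, ((X + C e) * W).coeff (m + 1)
      = W.coeff m + e * W.coeff (m + 1) := by
    intro m
    rw [add_mul, coeff_add, coeff_X_mul, coeff_C_mul]
  have hfdeg : f.degree < (n : WithBot ℕ) := by
    rw [degree_lt_iff_coeff_zero]
    intro m hm
    obtain ⟨k, rfl⟩ : ∃ k, m = k + 1 := ⟨m - 1, by omega⟩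
    rw [hf, coeff_sub, coeff_X_pow, hcoeff_mul]
    rcases eq_or_lt_of_le hm with hmn | hmn
    · -- k + 1 = n
      have hk : k = n - 1 := by omega
      rw [if_neg (by omega), hk, hW_n1, show n - 1 + 1 = n from by omega, hW_n]
      ring
    · rcases eq_or_lt_of_le (Nat.succ_le_of_lt hmn) with hmn1 | hmn1
      · -- k + 1 = n + 1
        have hk : k = n := by omega
        rw [if_pos (by omega), hk, hW_n, hW_hi (n + 1) (by omega)]
        ring
      · rw [if_neg (by omega), hW_hi k (by omega), hW_hi (k + 1) (by omega)]
        ring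
  have heval : ∀ k : Fin n, f.eval (μ k) = μ k ^ (n + 1) := by
    intro k
    have hWk : W.eval (μ k) = 0 := by
      rw [hW, eval_prod]
      exact Finset.prod_eq_zero (Finset.mem_univ k) (by simp)
    rw [hf]
    simp [hWk]
  have hinterp := Lagrange.eq_interpolate (s := (Finset.univ : Finset (Fin n))) (v := μ)
    (f := f) (Set.injOn_of_injective hinj) (by rw [hcardu]; exact hfdeg)
  -- coefficient of degree n-1 of the Lagrange basis
  have hbasis : ∀ k : Fin n, (Lagrange.basis Finset.univ μ k).coeff (n - 1)
      = ∏ j ∈ Finset.univ.erase k, (μ k - μ j)⁻¹ := by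
    intro k
    have hcard : #(Finset.univ.erase k) = n - 1 := by
      rw [Finset.card_erase_of_mem (Finset.mem_univ k), hcardu]
    rw [Lagrange.basis]
    unfold Lagrange.basisDivisor
    rw [Finset.prod_mul_distrib, ← map_prod, coeff_C_mul]
    have hmon : (∏ j ∈ Finset.univ.erase k, (X - C (μ j))).Monic :=
      monic_prod_of_monic _ _ fun i _ => monic_X_sub_C _
    have hdeg' : (∏ j ∈ Finset.univ.erase k, (X - C (μ j))).natDegree = n - 1 := by
      rw [natDegree_prod_of_monic _ _ fun i _ => monic_X_sub_C _]
      simp [hcard]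
    rw [show n - 1 = (∏ j ∈ Finset.univ.erase k, (X - C (μ j))).natDegree from hdeg'.symm,
      hmon.coeff_natDegree, mul_one]
  -- extract the coefficient identity
  have hcoeffid : f.coeff (n - 1)
      = ∑ k : Fin n, μ k ^ (n + 1) * ∏ j ∈ Finset.univ.erase k, (μ k - μ j)⁻¹ := by
    conv_lhs => rw [hinterp]
    rw [Lagrange.interpolate_apply, Polynomial.finset_sum_coeff]
    refine Finset.sum_congr rfl fun k _ => ?_
    rw [coeff_C_mul, hbasis k, heval k]
  -- compute f.coeff (n-1) directly
  have hfcoeff : f.coeff (n - 1) = e ^ 2 - P := by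
    have hn1 : n - 1 = (n - 2) + 1 := by omega
    rw [hf, coeff_sub, coeff_X_pow, if_neg (by omega), hn1, hcoeff_mul,
      show n - 2 + 1 = n - 1 from by omega, hW_n2, hW_n1]
    ring
  -- identify the theta sum
  have htheta : ∑ k : Fin n, (∏ j ∈ Finset.univ.erase k, μ k / (μ k - μ j)) * μ k ^ 2
      = ∑ k : Fin n, μ k ^ (n + 1) * ∏ j ∈ Finset.univ.erase k, (μ k - μ j)⁻¹ := by
    refine Finset.sum_congr rfl fun k _ => ?_
    have hcard : #(Finset.univ.erase k) = n - 1 := by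
      rw [Finset.card_erase_of_mem (Finset.mem_univ k), hcardu]
    have hprod : ∏ j ∈ Finset.univ.erase k, μ k / (μ k - μ j)
        = μ k ^ (n - 1) * ∏ j ∈ Finset.univ.erase k, (μ k - μ j)⁻¹ := by
      rw [Finset.prod_congr rfl fun j _ => div_eq_mul_inv (μ k) (μ k - μ j),
        Finset.prod_mul_distrib, Finset.prod_const, hcard]
    rw [hprod]
    have hpow : μ k ^ (n - 1) * μ k ^ 2 = μ k ^ (n + 1) := by
      rw [← pow_add]
      congr 1
      omega
    calc μ k ^ (n - 1) * (∏ j ∈ Finset.univ.erase k, (μ k - μ j)⁻¹) * μ k ^ 2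
        = (μ k ^ (n - 1) * μ k ^ 2) * ∏ j ∈ Finset.univ.erase k, (μ k - μ j)⁻¹ := by ring
      _ = μ k ^ (n + 1) * ∏ j ∈ Finset.univ.erase k, (μ k - μ j)⁻¹ := by rw [hpow]
  have hsum : ∑ k : Fin n, (∏ j ∈ Finset.univ.erase k, μ k / (μ k - μ j)) * μ k ^ 2
      = e ^ 2 - P := by
    rw [htheta, ← hcoeffid, hfcoeff]
  rw [hsum]
  have h1 : 2 * P = e ^ 2 - q := by
    rw [hP, he, hq]; exact aux_pow2 μ Finset.univ
  have h2 : 2 * (∑ i : Fin n, ∑ j ∈ Finset.Ioi i, μ i * μ j) = e ^ 2 - q := by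
    rw [he, hq]; exact aux_offdiag μ
  linarith
end
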